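/- For all reals μ ≥ 2 and D ≥ 2μ, there exists a single-machine instance with unit weights and all durations in [1, D] such that ℓ(t) ≤ 1 for every time t ∈ ℝ, while ℓ_μ(D) ≥ (μ−1)·ln(D/μ). -/

import Mathlib

open Finset
open scoped Classical

/-- Load at time `t : ℝ` of a single-machine instance with `n` jobs,
arrival times `a`, durations `d` and weights `w`: job `j` contributes
at times `t` with `a j < t ≤ a j + d j`. -/
noncomputable def singleLoad (n : ℕ) (a d w : Fin n → ℝ) (t : ℝ) : ℝ :=
  ∑ j ∈ Finset.univ.filter (fun j : Fin n => a j < t ∧ t ≤ a j + d j), w j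

/-- for reals `μ ≥ 2` and `D ≥ 2μ` there is a single-machine
instance with unit weights, nonnegative arrivals and durations in `[1, D]`
whose load is at most `1` at every time, yet after blowing up all durations
by `μ`, the load at time `D` is at least `(μ-1)·ln(D/μ)`. -/
theorem stmt8 (μ D : ℝ) (hμ : 2 ≤ μ) (hD : 2 * μ ≤ D) :
    ∃ (n : ℕ) (a d : Fin n → ℝ),
      (∀ j, 0 ≤ a j) ∧ (∀ j, 1 ≤ d j ∧ d j ≤ D) ∧
      (∀ t : ℝ, singleLoad n a d (fun _ => 1) t ≤ 1) ∧
      (μ - 1) * Real.log (D / μ) ≤ singleLoad n a (fun j => μ * d j) (fun _ => 1) D := by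
  have hμ0 : (0:ℝ) < μ := by linarith
  have hμ1 : (0:ℝ) < μ - 1 := by linarith
  have hD0 : (0:ℝ) < D := by linarith
  set r : ℝ := 1 - 1/μ with hr
  have hinv : 1/μ ≤ 1/2 := by
    rw [div_le_div_iff₀ hμ0 (by norm_num)]; linarith
  have hinv0 : 0 < 1/μ := by positivity
  have hr0 : 0 < r := by rw [hr]; linarith
  have hr1 : r < 1 := by rw [hr]; linarith
  set L : ℝ := Real.log (D/μ) with hLdef
  set n : ℕ := ⌈(μ-1)*L⌉₊ with hn
  refine ⟨n, fun j => D * (1 - r^(j:ℕ)), fun j => (D/μ) * r^(j:ℕ), ?_, ?_, ?_, ?_⟩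
  · intro j
    show 0 ≤ D * (1 - r^(j:ℕ))
    have : r^(j:ℕ) ≤ 1 := pow_le_one₀ hr0.le hr1.le
    nlinarith
  · intro j
    constructor
    · show (1:ℝ) ≤ (D/μ) * r^(j:ℕ)
      have hjlt : ((j:ℕ):ℝ) < (μ-1)*L := by
        exact_mod_cast Nat.lt_ceil.mp j.isLt
      have hlog : Real.log (μ/(μ-1)) ≤ 1/(μ-1) := by
        have h1 : (0:ℝ) < μ/(μ-1) := by positivity
        have h2 := Real.log_le_sub_one_of_pos h1
        have h3 : μ/(μ-1) - 1 = 1/(μ-1) := by field_simp; ring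
        linarith [h3 ▸ h2]
      have hk : ((j:ℕ):ℝ) * Real.log (μ/(μ-1)) ≤ L := by
        have h1 : ((j:ℕ):ℝ) * Real.log (μ/(μ-1)) ≤ ((j:ℕ):ℝ) * (1/(μ-1)) :=
          mul_le_mul_of_nonneg_left hlog (Nat.cast_nonneg _)
        have h2 : ((j:ℕ):ℝ) * (1/(μ-1)) ≤ L := by
          rw [mul_one_div, div_le_iff₀ hμ1]
          nlinarith
        linarith
      have hrval : r = (μ-1)/μ := by rw [hr]; field_simp
      have hlogr : Real.log r = - Real.log (μ/(μ-1)) := by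
        rw [hrval, ← Real.log_inv]
        congr 1
        field_simp
      have hkey : Real.log (μ/D) ≤ Real.log (r^(j:ℕ)) := by
        rw [Real.log_pow, hlogr]
        have hμD : Real.log (μ/D) = -L := by
          rw [hLdef, ← Real.log_inv]
          congr 1
          field_simp
        rw [hμD]
        linarith
      have hpos1 : (0:ℝ) < μ/D := by positivity
      have hpos2 : (0:ℝ) < r^(j:ℕ) := pow_pos hr0 _
      have hle := (Real.log_le_log_iff hpos1 hpos2).mp hkey
      rw [div_le_iff₀ hD0] at hle
      rw [div_mul_eq_mul_div, le_div_iff₀ hμ0, one_mul]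
      nlinarith
    · show (D/μ) * r^(j:ℕ) ≤ D
      have h1 : r^(j:ℕ) ≤ 1 := pow_le_one₀ hr0.le hr1.le
      have h2 : D/μ ≤ D := by
        rw [div_le_iff₀ hμ0]; nlinarith
      calc (D/μ) * r^(j:ℕ) ≤ (D/μ) * 1 :=
              mul_le_mul_of_nonneg_left h1 (by positivity)
           _ ≤ D := by linarith
  · intro t
    rw [singleLoad]
    rw [Finset.sum_const, nsmul_eq_mul, mul_one]
    have hcard : (Finset.univ.filter (fun j : Fin n =>
        D * (1 - r^(j:ℕ)) < t ∧ t ≤ D * (1 - r^(j:ℕ)) + (D/μ) * r^(j:ℕ))).card ≤ 1 := by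
      apply Finset.card_le_one.mpr
      intro j hj j' hj'
      simp only [Finset.mem_filter, Finset.mem_univ, true_and] at hj hj'
      by_contra hne
      have key : ∀ (x y : Fin n), (x:ℕ) < (y:ℕ) →
          (D * (1 - r^(x:ℕ)) < t ∧ t ≤ D * (1 - r^(x:ℕ)) + (D/μ) * r^(x:ℕ)) →
          (D * (1 - r^(y:ℕ)) < t ∧ t ≤ D * (1 - r^(y:ℕ)) + (D/μ) * r^(y:ℕ)) → False := by
        intro x y hxy hx hy
        have hsum : D * (1 - r^(x:ℕ)) + (D/μ) * r^(x:ℕ) = D * (1 - r^((x:ℕ)+1)) := by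
          rw [pow_succ, hr]; field_simp; ring
        have hmono : r^(y:ℕ) ≤ r^((x:ℕ)+1) := by
          apply pow_le_pow_of_le_one hr0.le hr1.le
          omega
        have : D * (1 - r^((x:ℕ)+1)) ≤ D * (1 - r^(y:ℕ)) := by nlinarith
        linarith [hx.2, hy.1]
      rcases lt_trichotomy (j:ℕ) (j':ℕ) with h | h | h
      · exact key j j' h hj hj'
      · exact hne (Fin.ext h)
      · exact key j' j h hj' hj
    exact_mod_cast hcard
  · rw [singleLoad]
    have hfull : (Finset.univ.filter (fun j : Fin n =>
        D * (1 - r^(j:ℕ)) < D ∧ D ≤ D * (1 - r^(j:ℕ)) + μ * ((D/μ) * r^(j:ℕ)))) = Finset.univ := by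
      apply Finset.filter_true_of_mem
      intro j _
      have hpos : (0:ℝ) < r^(j:ℕ) := pow_pos hr0 _
      constructor
      · nlinarith
      · have heq : μ * ((D/μ) * r^(j:ℕ)) = D * r^(j:ℕ) := by field_simp
        rw [heq]; nlinarith [le_refl D]
    rw [hfull, Finset.sum_const, nsmul_eq_mul, mul_one, Finset.card_univ, Fintype.card_fin]
    calc (μ-1)*L ≤ (⌈(μ-1)*L⌉₊ : ℝ) := Nat.le_ceil _
         _ = (n:ℝ) := by rw [hn]
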